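/- Let B be a finite index set and for each b ∈ B let J(b) ⊆ ℝ be an interval with |J(b)| ≥ δ > 0. Call b ∈ B 'good' if at most N of the intervals J(b̃) (b̃ ∈ B) have center within distance δ of the center of J(b). If at least half of the elements of B are good and N ≥ 1, then the measure of ⋃_{b ∈ B} J(b) is at least (|B|/2)·(δ/N). -/

import Mathlib

open MeasureTheory Set Classical ENNReal

/-- good intervals force a large union. `b` is good if at most `N`
of the intervals have center within distance `δ` of the center of `J(b)`. If at
least half of the indices are good, the union has measure at least
`(|B|/2)·(δ/N)`. -/
theorem stmt_8 {ι : Type*} [Fintype ι] (δ : ℝ) (hδ : 0 < δ) (N : ℕ) (hN : 1 ≤ N)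
    (lo hi : ι → ℝ) (hlen : ∀ b, δ ≤ hi b - lo b)
    (good : ι → Prop)
    (hgood : ∀ b, good b ↔
      ((Finset.univ.filter fun b' : ι =>
        |((lo b' + hi b') / 2) - ((lo b + hi b) / 2)| ≤ δ).card : ℕ) ≤ N)
    (hhalf : (Fintype.card ι : ℝ) ≤ 2 * ((Finset.univ.filter fun b => good b).card : ℝ)) :
    (Fintype.card ι : ℝ) / 2 * (δ / N) ≤
      (volume (⋃ b : ι, Set.Icc (lo b) (hi b))).toReal := by
  classical
  set c : ι → ℝ := fun b => (lo b + hi b) / 2 with hc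
  set K : ι → Set ℝ := fun b => Icc (c b - δ / 2) (c b + δ / 2) with hK
  set U : Set ℝ := ⋃ b : ι, Icc (lo b) (hi b) with hU
  set G : Finset ι := Finset.univ.filter fun b => good b with hG
  have hKsub : ∀ b, K b ⊆ Icc (lo b) (hi b) := by
    intro b
    apply Icc_subset_Icc
    · have := hlen b; simp only [hc]; linarith
    · have := hlen b; simp only [hc]; linarith
  have hUmeas : MeasurableSet U := MeasurableSet.iUnion fun b => measurableSet_Icc
  have hUfin : volume U ≠ ⊤ := by
    have h1 : volume U ≤ ∑' b : ι, volume (Icc (lo b) (hi b)) := measure_iUnion_le _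
    have h2 : ∑' b : ι, volume (Icc (lo b) (hi b)) < ⊤ := by
      rw [tsum_fintype]
      refine (ENNReal.sum_lt_top).2 fun b _ => ?_
      simp [Real.volume_Icc]
    exact (lt_of_le_of_lt h1 h2).ne
  have key : ∀ x : ℝ,
      (∑ b ∈ G, (K b).indicator (fun _ => (1 : ℝ≥0∞)) x) ≤
        (N : ℝ≥0∞) * U.indicator (fun _ => 1) x := by
    intro x
    by_cases hx : ∃ b ∈ G, x ∈ K b
    · obtain ⟨b₀, hb₀G, hb₀⟩ := hx
      have hxU : x ∈ U := mem_iUnion.2 ⟨b₀, hKsub b₀ hb₀⟩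
      rw [indicator_of_mem hxU, mul_one]
      have hsum : (∑ b ∈ G, (K b).indicator (fun _ => (1 : ℝ≥0∞)) x)
          = ((G.filter fun b => x ∈ K b).card : ℝ≥0∞) := by
        rw [Finset.card_filter]
        push_cast
        refine Finset.sum_congr rfl fun b _ => ?_
        by_cases h : x ∈ K b <;> simp [Set.indicator_apply, h]
      rw [hsum]
      have hb₀good : good b₀ := (Finset.mem_filter.1 hb₀G).2
      have hcard : (G.filter fun b => x ∈ K b).card ≤ N := by
        refine le_trans (Finset.card_le_card ?_) ((hgood b₀).1 hb₀good)
        intro b hb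
        rw [Finset.mem_filter] at hb ⊢
        refine ⟨Finset.mem_univ _, ?_⟩
        obtain ⟨hb1, hb2⟩ := hb
        simp only [hK, hc, mem_Icc] at hb2 hb₀
        rw [abs_le]
        constructor <;> linarith [hb2.1, hb2.2, hb₀.1, hb₀.2]
      exact_mod_cast hcard
    · push_neg at hx
      have : (∑ b ∈ G, (K b).indicator (fun _ => (1 : ℝ≥0∞)) x) = 0 := by
        refine Finset.sum_eq_zero fun b hb => ?_
        exact indicator_of_notMem (hx b hb) _
      rw [this]
      exact zero_le
  have hint : (G.card : ℝ≥0∞) * ENNReal.ofReal δ ≤ (N : ℝ≥0∞) * volume U := by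
    calc (G.card : ℝ≥0∞) * ENNReal.ofReal δ
        = ∑ b ∈ G, volume (K b) := by
          have hv : ∀ b, volume (K b) = ENNReal.ofReal δ := by
            intro b
            rw [hK]
            rw [Real.volume_Icc]
            congr 1
            ring
          rw [Finset.sum_congr rfl fun b _ => hv b, Finset.sum_const, nsmul_eq_mul]
      _ = ∑ b ∈ G, ∫⁻ x, (K b).indicator (fun _ => (1 : ℝ≥0∞)) x := by
          refine Finset.sum_congr rfl fun b _ => ?_
          rw [lintegral_indicator_const measurableSet_Icc, one_mul]
      _ = ∫⁻ x, ∑ b ∈ G, (K b).indicator (fun _ => (1 : ℝ≥0∞)) x := by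
          rw [lintegral_finset_sum]
          intro b _
          exact (measurable_one.indicator measurableSet_Icc)
      _ ≤ ∫⁻ x, (N : ℝ≥0∞) * U.indicator (fun _ => 1) x := lintegral_mono key
      _ = (N : ℝ≥0∞) * volume U := by
          rw [lintegral_const_mul' _ _ (by simp)]
          simp [lintegral_indicator hUmeas]
  have hreal : (G.card : ℝ) * δ ≤ (N : ℝ) * (volume U).toReal := by
    have hfin : (N : ℝ≥0∞) * volume U ≠ ⊤ := ENNReal.mul_ne_top (by simp) hUfin
    have := ENNReal.toReal_mono hfin hint
    rw [ENNReal.toReal_mul, ENNReal.toReal_mul] at this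
    simpa [ENNReal.toReal_ofReal hδ.le] using this
  have hNpos : (0 : ℝ) < N := by exact_mod_cast hN
  have hG2 : (Fintype.card ι : ℝ) / 2 ≤ (G.card : ℝ) := by linarith
  calc (Fintype.card ι : ℝ) / 2 * (δ / N) ≤ (G.card : ℝ) * (δ / N) := by
        apply mul_le_mul_of_nonneg_right hG2 (by positivity)
    _ ≤ (volume U).toReal := by
        rw [mul_div_assoc'] at *
        rw [div_le_iff₀ hNpos]
        linarith
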